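/- Let $\rho:\mathbb{Z}\to[0,\infty)$ be even with $\rho(0)=1$ and $\sum_{i\ge0}\rho(i)<\infty$, and let $\sigma:(0,\infty)\to(0,\infty)$ be arbitrary with $s(t)^2:=\int_0^t\sigma(\lceil x\rceil)^2dx$ and inverse $w$ of $s$. Then for all $u>0$ and $b\ge1$: $\int_{w(u)}^{w(bu)}\int_0^{w(bu)}\sigma(\lceil x\rceil)\sigma(\lceil y\rceil)\rho(\lceil x\rceil-\lceil y\rceil)\,dy\,dx\le C(\rho)\, b u^2\sqrt{b^2-1}$ for a constant $C(\rho)$ depending only on $\rho$. -/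

import Mathlib

open MeasureTheory Real Set
open scoped ENNReal

lemma ceil_rho_lintegral_le (ρ : ℤ → ℝ) (hρnonneg : ∀ i : ℤ, 0 ≤ ρ i)
    (hρZ : Summable (fun j : ℤ => ρ j)) (m : ℤ) (a c : ℝ) :
    (∫⁻ t in Set.Ioo a c, ENNReal.ofReal (ρ (m - ⌈t⌉))) ≤ ENNReal.ofReal (∑' j : ℤ, ρ j) := by
  have hpt : ∀ t : ℝ, ENNReal.ofReal (ρ (m - ⌈t⌉)) =
      ∑' k : ℤ, (Set.Ioc ((k : ℝ) - 1) (k : ℝ)).indicator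
        (fun _ => ENNReal.ofReal (ρ (m - k))) t := by
    intro t
    rw [tsum_eq_single ⌈t⌉ ?_]
    · rw [Set.indicator_of_mem]
      exact ⟨by linarith [Int.ceil_lt_add_one t], Int.le_ceil t⟩
    · intro k hk
      rw [Set.indicator_of_notMem]
      intro hmem
      exact hk (Int.ceil_eq_iff.mpr ⟨hmem.1, hmem.2⟩).symm
  calc (∫⁻ t in Set.Ioo a c, ENNReal.ofReal (ρ (m - ⌈t⌉)))
      = ∫⁻ t in Set.Ioo a c, ∑' k : ℤ, (Set.Ioc ((k : ℝ) - 1) (k : ℝ)).indicator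
          (fun _ => ENNReal.ofReal (ρ (m - k))) t := by
        exact lintegral_congr fun t => hpt t
    _ = ∑' k : ℤ, ∫⁻ t in Set.Ioo a c, (Set.Ioc ((k : ℝ) - 1) (k : ℝ)).indicator
          (fun _ => ENNReal.ofReal (ρ (m - k))) t :=
        lintegral_tsum fun k => (measurable_const.indicator measurableSet_Ioc).aemeasurable
    _ ≤ ∑' k : ℤ, ENNReal.ofReal (ρ (m - k)) := by
        refine ENNReal.tsum_le_tsum fun k => ?_
        rw [lintegral_indicator_const measurableSet_Ioc]
        have h1 : (volume.restrict (Set.Ioo a c)) (Set.Ioc ((k : ℝ) - 1) (k : ℝ)) ≤ 1 := by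
          refine le_trans (Measure.restrict_apply_le _ _) ?_
          rw [Real.volume_Ioc]
          simp
        calc ENNReal.ofReal (ρ (m - k)) * (volume.restrict (Set.Ioo a c)) (Set.Ioc ((k:ℝ)-1) k)
            ≤ ENNReal.ofReal (ρ (m - k)) * 1 := mul_le_mul_right h1 _
          _ = ENNReal.ofReal (ρ (m - k)) := mul_one _
    _ = ∑' j : ℤ, ENNReal.ofReal (ρ j) := (Equiv.subLeft m).tsum_eq fun j => ENNReal.ofReal (ρ j)
    _ = ENNReal.ofReal (∑' j : ℤ, ρ j) := (ENNReal.ofReal_tsum_of_nonneg hρnonneg hρZ).symm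

set_option maxHeartbeats 2000000 in
theorem stmt_18 (ρ : ℤ → ℝ)
    (hρ0 : ρ 0 = 1) (hρnonneg : ∀ i : ℤ, 0 ≤ ρ i) (hρeven : ∀ i : ℤ, ρ (-i) = ρ i)
    (hρsum : Summable (fun i : ℕ => ρ (i : ℤ))) :
    ∃ C : ℝ, 0 < C ∧
      ∀ (σ : ℕ → ℝ) (w : ℝ → ℝ),
        (∀ i, 0 < σ i) →
        (∀ u : ℝ, 0 < u → 0 ≤ w u) →
        (∀ u : ℝ, 0 < u → (∫ x in (0:ℝ)..(w u), (σ (⌈x⌉.toNat)) ^ 2) = u ^ 2) →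
        (∀ u v : ℝ, 0 < u → u ≤ v → w u ≤ w v) →
        ∀ u : ℝ, 0 < u → ∀ b : ℝ, 1 ≤ b →
          (∫⁻ x in Ioo (w u) (w (b * u)), ∫⁻ y in Ioo (0:ℝ) (w (b * u)),
              ENNReal.ofReal (σ (⌈x⌉.toNat) * σ (⌈y⌉.toNat) * ρ (⌈x⌉ - ⌈y⌉)))
            ≤ ENNReal.ofReal (C * b * u ^ 2 * Real.sqrt (b ^ 2 - 1)) := by
  classical
  set S : ℝ := ∑' i : ℕ, ρ (i : ℤ) with hSdef
  have hS1 : (1:ℝ) ≤ S := hρ0 ▸ Summable.le_tsum hρsum 0 fun b _ => hρnonneg _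
  have htail : Summable (fun n : ℕ => ρ (-(n + 1) : ℤ)) := by
    have h1 : Summable (fun n : ℕ => ρ ((n + 1 : ℕ) : ℤ)) := (summable_nat_add_iff 1).2 hρsum
    refine h1.congr fun n => ?_
    rw [← hρeven]
    push_cast
    ring_nf
  have hρZ : Summable (fun j : ℤ => ρ j) := Summable.of_nat_of_neg_add_one hρsum htail
  have hsumZ : ∑' j : ℤ, ρ j ≤ 2 * S := by
    rw [tsum_of_nat_of_neg_add_one hρsum htail]
    have h2 : ∑' n : ℕ, ρ (-(n + 1) : ℤ) ≤ S := by
      have he : ∀ n : ℕ, ρ (-(n + 1) : ℤ) = ρ ((n + 1 : ℕ) : ℤ) := by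
        intro n; rw [← hρeven]; push_cast; ring_nf
      rw [tsum_congr he]
      refine Summable.tsum_le_tsum_of_inj (fun n => n + 1) (add_left_injective 1)
        (fun c _ => hρnonneg _) (fun n => le_rfl) ((summable_nat_add_iff 1).2 hρsum) hρsum
    linarith [le_refl S]
  have hSpos : (0:ℝ) < 2 * S := by linarith
  refine ⟨2 * S, hSpos, ?_⟩
  intro σ w hσpos hw0 hInt hwmono u hu b hb
  have hbu : 0 < b * u := by nlinarith
  have hule : u ≤ b * u := by nlinarith
  have hwle : w u ≤ w (b * u) := hwmono u (b * u) hu hule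
  have hw0u : 0 ≤ w u := hw0 u hu
  have hw0bu : 0 ≤ w (b * u) := hw0 _ hbu
  -- integrability of σ(⌈x⌉)²
  have hIbu : IntervalIntegrable (fun x => (σ (⌈x⌉.toNat)) ^ 2) volume 0 (w (b * u)) := by
    by_contra h
    have h0 := hInt (b * u) hbu
    rw [intervalIntegral.integral_undef h] at h0
    nlinarith
  have hIu : IntervalIntegrable (fun x => (σ (⌈x⌉.toNat)) ^ 2) volume 0 (w u) :=
    hIbu.mono_set (by rw [uIcc_of_le hw0u, uIcc_of_le hw0bu]; exact Icc_subset_Icc le_rfl hwle)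
  have hImid : IntervalIntegrable (fun x => (σ (⌈x⌉.toNat)) ^ 2) volume (w u) (w (b * u)) :=
    hIbu.mono_set (by rw [uIcc_of_le hwle, uIcc_of_le hw0bu]; exact Icc_subset_Icc hw0u le_rfl)
  have hmid : ∫ x in (w u)..(w (b * u)), (σ (⌈x⌉.toNat)) ^ 2 = (b * u) ^ 2 - u ^ 2 := by
    have hadd := intervalIntegral.integral_add_adjacent_intervals hIu hImid
    rw [hInt u hu, hInt (b * u) hbu] at hadd
    linarith
  -- measurability
  have hmσ : Measurable fun x : ℝ => σ (⌈x⌉.toNat) :=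
    (measurable_of_countable (fun k : ℤ => σ k.toNat)).comp Int.measurable_ceil
  have hmceil2 : Measurable fun p : ℝ × ℝ => (⌈p.1⌉, ⌈p.2⌉) :=
    (Int.measurable_ceil.comp measurable_fst).prodMk (Int.measurable_ceil.comp measurable_snd)
  -- lintegral values of σ²
  have L1 : (∫⁻ x in Ioo (w u) (w (b * u)), ENNReal.ofReal ((σ (⌈x⌉.toNat)) ^ 2))
      = ENNReal.ofReal ((b * u) ^ 2 - u ^ 2) := by
    have hint : IntegrableOn (fun x => (σ (⌈x⌉.toNat)) ^ 2) (Ioo (w u) (w (b * u))) volume :=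
      hImid.1.mono_set Ioo_subset_Ioc_self
    rw [← ofReal_integral_eq_lintegral_ofReal hint (Filter.Eventually.of_forall fun x => sq_nonneg _)]
    congr 1
    rw [← integral_Ioc_eq_integral_Ioo, ← intervalIntegral.integral_of_le hwle, hmid]
  have L2 : (∫⁻ y in Ioo (0:ℝ) (w (b * u)), ENNReal.ofReal ((σ (⌈y⌉.toNat)) ^ 2))
      = ENNReal.ofReal ((b * u) ^ 2) := by
    have hint : IntegrableOn (fun x => (σ (⌈x⌉.toNat)) ^ 2) (Ioo 0 (w (b * u))) volume :=
      hIbu.1.mono_set Ioo_subset_Ioc_self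
    rw [← ofReal_integral_eq_lintegral_ofReal hint (Filter.Eventually.of_forall fun x => sq_nonneg _)]
    congr 1
    rw [← integral_Ioc_eq_integral_Ioo, ← intervalIntegral.integral_of_le hw0bu, hInt (b * u) hbu]
  -- ρ integral bounds
  have hA1 : ∀ x : ℝ, (∫⁻ y in Ioo (0:ℝ) (w (b * u)), ENNReal.ofReal (ρ (⌈x⌉ - ⌈y⌉)))
      ≤ ENNReal.ofReal (2 * S) := fun x =>
    (ceil_rho_lintegral_le ρ hρnonneg hρZ ⌈x⌉ 0 _).trans (ENNReal.ofReal_le_ofReal hsumZ)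
  have hA2 : ∀ y : ℝ, (∫⁻ x in Ioo (w u) (w (b * u)), ENNReal.ofReal (ρ (⌈x⌉ - ⌈y⌉)))
      ≤ ENNReal.ofReal (2 * S) := by
    intro y
    have he : ∀ x : ℝ, ρ (⌈x⌉ - ⌈y⌉) = ρ (⌈y⌉ - ⌈x⌉) := by
      intro x; rw [← hρeven (⌈y⌉ - ⌈x⌉)]; congr 1; ring
    simp_rw [he]
    exact (ceil_rho_lintegral_le ρ hρnonneg hρZ ⌈y⌉ _ _).trans (ENNReal.ofReal_le_ofReal hsumZ)
  -- Cauchy-Schwarz setup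
  set μ1 : Measure ℝ := volume.restrict (Ioo (w u) (w (b * u))) with hμ1
  set μ2 : Measure ℝ := volume.restrict (Ioo (0:ℝ) (w (b * u))) with hμ2
  set F : ℝ × ℝ → ℝ≥0∞ :=
    fun p => ENNReal.ofReal (σ (⌈p.1⌉.toNat) * Real.sqrt (ρ (⌈p.1⌉ - ⌈p.2⌉))) with hF
  set G : ℝ × ℝ → ℝ≥0∞ :=
    fun p => ENNReal.ofReal (σ (⌈p.2⌉.toNat) * Real.sqrt (ρ (⌈p.1⌉ - ⌈p.2⌉))) with hG
  have hmF : Measurable F :=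
    ENNReal.measurable_ofReal.comp
      ((measurable_of_countable (fun q : ℤ × ℤ => σ q.1.toNat * Real.sqrt (ρ (q.1 - q.2)))).comp
        hmceil2)
  have hmG : Measurable G :=
    ENNReal.measurable_ofReal.comp
      ((measurable_of_countable (fun q : ℤ × ℤ => σ q.2.toNat * Real.sqrt (ρ (q.1 - q.2)))).comp
        hmceil2)
  have hmH : Measurable fun p : ℝ × ℝ =>
      ENNReal.ofReal (σ (⌈p.1⌉.toNat) * σ (⌈p.2⌉.toNat) * ρ (⌈p.1⌉ - ⌈p.2⌉)) :=
    ENNReal.measurable_ofReal.comp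
      ((measurable_of_countable (fun q : ℤ × ℤ => σ q.1.toNat * σ q.2.toNat * ρ (q.1 - q.2))).comp
        hmceil2)
  have hFG : ∀ p : ℝ × ℝ, F p * G p =
      ENNReal.ofReal (σ (⌈p.1⌉.toNat) * σ (⌈p.2⌉.toNat) * ρ (⌈p.1⌉ - ⌈p.2⌉)) := by
    intro p
    rw [hF, hG, ← ENNReal.ofReal_mul (mul_nonneg (hσpos _).le (Real.sqrt_nonneg _))]
    congr 1
    rw [show σ (⌈p.1⌉.toNat) * Real.sqrt (ρ (⌈p.1⌉ - ⌈p.2⌉)) *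
        (σ (⌈p.2⌉.toNat) * Real.sqrt (ρ (⌈p.1⌉ - ⌈p.2⌉)))
        = σ (⌈p.1⌉.toNat) * σ (⌈p.2⌉.toNat) *
          (Real.sqrt (ρ (⌈p.1⌉ - ⌈p.2⌉)) * Real.sqrt (ρ (⌈p.1⌉ - ⌈p.2⌉))) by ring,
      Real.mul_self_sqrt (hρnonneg _)]
  -- rewrite LHS as product integral
  have hprod : (∫⁻ x in Ioo (w u) (w (b * u)), ∫⁻ y in Ioo (0:ℝ) (w (b * u)),
        ENNReal.ofReal (σ (⌈x⌉.toNat) * σ (⌈y⌉.toNat) * ρ (⌈x⌉ - ⌈y⌉)))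
      = ∫⁻ p, (F * G) p ∂(μ1.prod μ2) := by
    rw [show (∫⁻ p, (F * G) p ∂(μ1.prod μ2))
        = ∫⁻ p, ENNReal.ofReal (σ (⌈p.1⌉.toNat) * σ (⌈p.2⌉.toNat) * ρ (⌈p.1⌉ - ⌈p.2⌉))
            ∂(μ1.prod μ2) from lintegral_congr fun p => hFG p]
    exact (lintegral_prod _ hmH.aemeasurable).symm
  rw [hprod]
  -- Hölder
  have hconj : Real.HolderConjugate 2 2 := Real.HolderConjugate.two_two
  have hCS := ENNReal.lintegral_mul_le_Lp_mul_Lq (μ1.prod μ2) hconj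
    hmF.aemeasurable hmG.aemeasurable
  -- bound ∫ F²
  have hF2 : (∫⁻ p, F p ^ (2:ℝ) ∂(μ1.prod μ2))
      ≤ ENNReal.ofReal (2 * S) * ENNReal.ofReal ((b * u) ^ 2 - u ^ 2) := by
    have hpt : ∀ p : ℝ × ℝ, F p ^ (2:ℝ) =
        ENNReal.ofReal ((σ (⌈p.1⌉.toNat)) ^ 2) * ENNReal.ofReal (ρ (⌈p.1⌉ - ⌈p.2⌉)) := by
      intro p
      rw [hF, ← ENNReal.ofReal_mul (sq_nonneg _),
        ENNReal.ofReal_rpow_of_nonneg (mul_nonneg (hσpos _).le (Real.sqrt_nonneg _)) (by norm_num)]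
      congr 1
      rw [show ((2:ℝ)) = ((2:ℕ):ℝ) by norm_num, Real.rpow_natCast, mul_pow,
        Real.sq_sqrt (hρnonneg _)]
    calc (∫⁻ p, F p ^ (2:ℝ) ∂(μ1.prod μ2))
        = ∫⁻ x, (∫⁻ y,
            ENNReal.ofReal ((σ (⌈x⌉.toNat)) ^ 2) * ENNReal.ofReal (ρ (⌈x⌉ - ⌈y⌉)) ∂μ2) ∂μ1 := by
          rw [show (fun p : ℝ × ℝ => F p ^ (2:ℝ)) = fun p =>
              ENNReal.ofReal ((σ (⌈p.1⌉.toNat)) ^ 2) * ENNReal.ofReal (ρ (⌈p.1⌉ - ⌈p.2⌉))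
            from funext hpt]
          exact lintegral_prod _ (((ENNReal.measurable_ofReal.comp
              ((measurable_of_countable (fun k : ℤ => (σ k.toNat) ^ 2)).comp
                (Int.measurable_ceil.comp measurable_fst))).mul
            (ENNReal.measurable_ofReal.comp
              ((measurable_of_countable (fun q : ℤ × ℤ => ρ (q.1 - q.2))).comp
                hmceil2))).aemeasurable)
      _ = ∫⁻ x, (ENNReal.ofReal ((σ (⌈x⌉.toNat)) ^ 2) *
            ∫⁻ y, ENNReal.ofReal (ρ (⌈x⌉ - ⌈y⌉)) ∂μ2) ∂μ1 := by
          refine lintegral_congr fun x => ?_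
          exact lintegral_const_mul _ (((measurable_of_countable
            (fun k : ℤ => ENNReal.ofReal (ρ (⌈x⌉ - k)))).comp Int.measurable_ceil))
      _ ≤ ∫⁻ x, (ENNReal.ofReal ((σ (⌈x⌉.toNat)) ^ 2) * ENNReal.ofReal (2 * S)) ∂μ1 :=
          lintegral_mono fun x => mul_le_mul_right (hA1 x) _
      _ = (∫⁻ x, ENNReal.ofReal ((σ (⌈x⌉.toNat)) ^ 2) ∂μ1) * ENNReal.ofReal (2 * S) :=
          lintegral_mul_const _ (ENNReal.measurable_ofReal.comp (hmσ.pow_const 2))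
      _ = ENNReal.ofReal (2 * S) * ENNReal.ofReal ((b * u) ^ 2 - u ^ 2) := by
          rw [L1, mul_comm]
  -- bound ∫ G²
  have hG2 : (∫⁻ p, G p ^ (2:ℝ) ∂(μ1.prod μ2))
      ≤ ENNReal.ofReal (2 * S) * ENNReal.ofReal ((b * u) ^ 2) := by
    have hpt : ∀ p : ℝ × ℝ, G p ^ (2:ℝ) =
        ENNReal.ofReal ((σ (⌈p.2⌉.toNat)) ^ 2) * ENNReal.ofReal (ρ (⌈p.1⌉ - ⌈p.2⌉)) := by
      intro p
      rw [hG, ← ENNReal.ofReal_mul (sq_nonneg _),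
        ENNReal.ofReal_rpow_of_nonneg (mul_nonneg (hσpos _).le (Real.sqrt_nonneg _)) (by norm_num)]
      congr 1
      rw [show ((2:ℝ)) = ((2:ℕ):ℝ) by norm_num, Real.rpow_natCast, mul_pow,
        Real.sq_sqrt (hρnonneg _)]
    calc (∫⁻ p, G p ^ (2:ℝ) ∂(μ1.prod μ2))
        = ∫⁻ y, (∫⁻ x,
            ENNReal.ofReal ((σ (⌈y⌉.toNat)) ^ 2) * ENNReal.ofReal (ρ (⌈x⌉ - ⌈y⌉)) ∂μ1) ∂μ2 := by
          rw [show (fun p : ℝ × ℝ => G p ^ (2:ℝ)) = fun p =>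
              ENNReal.ofReal ((σ (⌈p.2⌉.toNat)) ^ 2) * ENNReal.ofReal (ρ (⌈p.1⌉ - ⌈p.2⌉))
            from funext hpt]
          exact lintegral_prod_symm _ (((ENNReal.measurable_ofReal.comp
              ((measurable_of_countable (fun k : ℤ => (σ k.toNat) ^ 2)).comp
                (Int.measurable_ceil.comp measurable_snd))).mul
            (ENNReal.measurable_ofReal.comp
              ((measurable_of_countable (fun q : ℤ × ℤ => ρ (q.1 - q.2))).comp
                hmceil2))).aemeasurable)
      _ = ∫⁻ y, (ENNReal.ofReal ((σ (⌈y⌉.toNat)) ^ 2) *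
            ∫⁻ x, ENNReal.ofReal (ρ (⌈x⌉ - ⌈y⌉)) ∂μ1) ∂μ2 := by
          refine lintegral_congr fun y => ?_
          exact lintegral_const_mul _ (((measurable_of_countable
            (fun k : ℤ => ENNReal.ofReal (ρ (k - ⌈y⌉)))).comp Int.measurable_ceil))
      _ ≤ ∫⁻ y, (ENNReal.ofReal ((σ (⌈y⌉.toNat)) ^ 2) * ENNReal.ofReal (2 * S)) ∂μ2 :=
          lintegral_mono fun y => mul_le_mul_right (hA2 y) _
      _ = (∫⁻ y, ENNReal.ofReal ((σ (⌈y⌉.toNat)) ^ 2) ∂μ2) * ENNReal.ofReal (2 * S) :=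
          lintegral_mul_const _ (ENNReal.measurable_ofReal.comp (hmσ.pow_const 2))
      _ = ENNReal.ofReal (2 * S) * ENNReal.ofReal ((b * u) ^ 2) := by
          rw [L2, mul_comm]
  -- final arithmetic
  have hM1 : (0:ℝ) ≤ (b * u) ^ 2 - u ^ 2 := by nlinarith
  have h2S : (0:ℝ) ≤ 2 * S := le_of_lt hSpos
  calc (∫⁻ p, (F * G) p ∂(μ1.prod μ2))
      ≤ (∫⁻ p, F p ^ (2:ℝ) ∂(μ1.prod μ2)) ^ (1/(2:ℝ)) *
        (∫⁻ p, G p ^ (2:ℝ) ∂(μ1.prod μ2)) ^ (1/(2:ℝ)) := hCS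
    _ ≤ (ENNReal.ofReal (2 * S) * ENNReal.ofReal ((b * u) ^ 2 - u ^ 2)) ^ (1/(2:ℝ)) *
        (ENNReal.ofReal (2 * S) * ENNReal.ofReal ((b * u) ^ 2)) ^ (1/(2:ℝ)) :=
        mul_le_mul' (ENNReal.rpow_le_rpow hF2 (by norm_num))
          (ENNReal.rpow_le_rpow hG2 (by norm_num))
    _ = ENNReal.ofReal ((2 * S * ((b * u) ^ 2 - u ^ 2)) ^ (1/(2:ℝ)) *
          (2 * S * (b * u) ^ 2) ^ (1/(2:ℝ))) := by
        rw [← ENNReal.ofReal_mul h2S, ← ENNReal.ofReal_mul h2S,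
          ENNReal.ofReal_rpow_of_nonneg (by positivity) (by norm_num),
          ENNReal.ofReal_rpow_of_nonneg (by positivity) (by norm_num),
          ENNReal.ofReal_mul (by positivity)]
    _ ≤ ENNReal.ofReal (2 * S * b * u ^ 2 * Real.sqrt (b ^ 2 - 1)) := by
        refine ENNReal.ofReal_le_ofReal (le_of_eq ?_)
        rw [← Real.sqrt_eq_rpow, ← Real.sqrt_eq_rpow, ← Real.sqrt_mul (by positivity)]
        rw [show 2 * S * ((b * u) ^ 2 - u ^ 2) * (2 * S * (b * u) ^ 2)
            = (2 * S * b * u ^ 2) ^ 2 * (b ^ 2 - 1) by ring]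
        rw [Real.sqrt_mul (sq_nonneg _), Real.sqrt_sq (by positivity)]
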